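/- For every integer M ≥ 1, writing X = ⌊2√M⌋, one has ∑_{x=1}^{X} √(4M − x²) ≤ (1/2)·X·√(4M − X²) + 2M·arcsin(X/(2√M)) < 2·M^{3/4} + π·M. -/

import Mathlib

open Finset Real

lemma integral_sqrt_sub_sq_aux (M : ℕ) (hM : 1 ≤ M) (Y : ℝ) (hY0 : 0 ≤ Y)
    (hY : Y ≤ 2 * Real.sqrt M) :
    ∫ t in (0:ℝ)..Y, Real.sqrt (4 * M - t ^ 2)
      = (1 / 2) * Y * Real.sqrt (4 * M - Y ^ 2)
        + 2 * M * Real.arcsin (Y / (2 * Real.sqrt M)) := by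
  have hMpos : (0:ℝ) < M := by exact_mod_cast hM
  set s : ℝ := 2 * Real.sqrt M with hs
  have hspos : 0 < s := by positivity
  have hs2 : s ^ 2 = 4 * M := by
    rw [hs, mul_pow, Real.sq_sqrt hMpos.le]; ring
  have hratio : Y / s ≤ 1 := (div_le_one hspos).2 hY
  have hratio0 : 0 ≤ Y / s := by positivity
  set α : ℝ := Real.arcsin (Y / s) with hα
  have hα0 : 0 ≤ α := Real.arcsin_nonneg.2 hratio0
  have hαle : α ≤ π / 2 := Real.arcsin_le_pi_div_two _
  have hsinα : Real.sin α = Y / s := Real.sin_arcsin (by linarith) hratio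
  have hcosα : Real.cos α = Real.sqrt (4 * M - Y ^ 2) / s := by
    have h4M : Real.sqrt (4 * M) = s := by rw [← hs2, Real.sqrt_sq hspos.le]
    rw [hα, Real.cos_arcsin, div_pow, hs2,
      one_sub_div (by positivity : (4:ℝ) * M ≠ 0),
      Real.sqrt_div (by nlinarith : (0:ℝ) ≤ 4 * M - Y ^ 2), h4M]
  have key : (∫ θ in (0:ℝ)..α, (fun t => Real.sqrt (4 * M - t ^ 2)) (s * Real.sin θ)
        * (s * Real.cos θ)) = ∫ t in (0:ℝ)..Y, Real.sqrt (4 * M - t ^ 2) := by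
    have := intervalIntegral.integral_comp_mul_deriv
      (a := (0:ℝ)) (b := α) (f := fun θ => s * Real.sin θ)
      (f' := fun θ => s * Real.cos θ) (g := fun t => Real.sqrt (4 * M - t ^ 2))
      (fun x _ => (Real.hasDerivAt_sin x).const_mul s)
      (by fun_prop)
      (by fun_prop)
    simpa [hsinα, mul_div_cancel₀ _ hspos.ne', Function.comp] using this
  rw [← key]
  have hcongr : (∫ θ in (0:ℝ)..α, (fun t => Real.sqrt (4 * M - t ^ 2)) (s * Real.sin θ)
        * (s * Real.cos θ)) = ∫ θ in (0:ℝ)..α, (4 * M) * Real.cos θ ^ 2 := by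
    apply intervalIntegral.integral_congr
    intro θ hθ
    rw [Set.uIcc_of_le hα0] at hθ
    have hcos : 0 ≤ Real.cos θ := Real.cos_nonneg_of_mem_Icc
      ⟨by linarith [hθ.1, Real.pi_pos], le_trans hθ.2 hαle⟩
    have h1 : 4 * (M:ℝ) - (s * Real.sin θ) ^ 2 = s ^ 2 * Real.cos θ ^ 2 := by
      rw [hs2]; have := Real.sin_sq_add_cos_sq θ; nlinarith
    simp only
    rw [h1, Real.sqrt_mul (by positivity), Real.sqrt_sq hspos.le,
      Real.sqrt_sq hcos]
    linear_combination (4 * Real.cos θ ^ 2) * Real.sq_sqrt hMpos.le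
  rw [hcongr, intervalIntegral.integral_const_mul, integral_cos_sq]
  rw [hcosα, hsinα]
  field_simp
  ring_nf
  linear_combination (-4 * Y * Real.sqrt ((M:ℝ) * 4 - Y ^ 2)) * Real.sq_sqrt hMpos.le
    + (-16 * (M:ℝ) * Real.sqrt (M:ℝ) ^ 2 * Real.cos 0) * Real.sin_zero

/-- For `M ≥ 1` and `X = ⌊2√M⌋`, the sum `∑_{x=1}^{X} √(4M - x²)` is at most
`(1/2)·X·√(4M - X²) + 2M·arcsin(X/(2√M))`, which is strictly less than
`2·M^(3/4) + π·M`. -/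
theorem stmt_8 (M : ℕ) (hM : 1 ≤ M) :
    (∑ x ∈ Finset.Icc 1 (Nat.floor (2 * Real.sqrt M)),
        Real.sqrt (4 * M - (x : ℝ) ^ 2))
      ≤ (1 / 2) * (Nat.floor (2 * Real.sqrt M) : ℝ)
            * Real.sqrt (4 * M - (Nat.floor (2 * Real.sqrt M) : ℝ) ^ 2)
        + 2 * M * Real.arcsin ((Nat.floor (2 * Real.sqrt M) : ℝ) / (2 * Real.sqrt M)) ∧
    (1 / 2) * (Nat.floor (2 * Real.sqrt M) : ℝ)
          * Real.sqrt (4 * M - (Nat.floor (2 * Real.sqrt M) : ℝ) ^ 2)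
        + 2 * M * Real.arcsin ((Nat.floor (2 * Real.sqrt M) : ℝ) / (2 * Real.sqrt M))
      < 2 * (M : ℝ) ^ ((3 : ℝ) / 4) + Real.pi * M := by
  have hMpos : (0:ℝ) < M := by exact_mod_cast hM
  set s : ℝ := 2 * Real.sqrt M with hs
  have hspos : 0 < s := by positivity
  have hs2 : s ^ 2 = 4 * M := by
    rw [hs, mul_pow, Real.sq_sqrt hMpos.le]; ring
  set X : ℕ := Nat.floor s with hX
  have hXle : (X:ℝ) ≤ s := Nat.floor_le hspos.le
  have hXgt : s < X + 1 := Nat.lt_floor_add_one s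
  have hnn : (0:ℝ) ≤ 4 * M - (X:ℝ) ^ 2 := by nlinarith
  constructor
  · -- sum ≤ integral = closed form
    rw [← integral_sqrt_sub_sq_aux M hM X (by positivity) hXle]
    have hmono : AntitoneOn (fun t : ℝ => Real.sqrt (4 * M - t ^ 2))
        (Set.Icc (0:ℝ) (0 + X)) := by
      intro u hu v hv huv
      apply Real.sqrt_le_sqrt
      have : u ^ 2 ≤ v ^ 2 := pow_le_pow_left₀ hu.1 huv 2
      linarith
    have := AntitoneOn.sum_le_integral (x₀ := (0:ℝ)) (a := X)
      (f := fun t : ℝ => Real.sqrt (4 * M - t ^ 2)) hmono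
    simp only [zero_add] at this
    refine le_trans (le_of_eq ?_) this
    rw [show Finset.Icc 1 X = Finset.Ico 1 (X + 1) from (Finset.Ico_add_one_right_eq_Icc (a := 1) (b := X)).symm,
      Finset.sum_Ico_eq_sum_range, Nat.add_sub_cancel]
    apply Finset.sum_congr (by norm_num)
    intro i _
    push_cast
    ring_nf
  · -- strict upper bound
    have hterm1 : (1 / 2) * (X:ℝ) * Real.sqrt (4 * M - (X:ℝ) ^ 2)
        ≤ 2 * (M : ℝ) ^ ((3 : ℝ) / 4) := by
      have h1 : 4 * (M:ℝ) - (X:ℝ) ^ 2 ≤ 2 * s := by nlinarith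
      have h2 : Real.sqrt (4 * M - (X:ℝ) ^ 2) ≤ Real.sqrt (2 * s) :=
        Real.sqrt_le_sqrt h1
      have h3 : Real.sqrt (2 * s) = 2 * (M:ℝ) ^ ((1:ℝ)/4) := by
        rw [hs, show (2:ℝ) * (2 * Real.sqrt M) = 4 * Real.sqrt M by ring,
          Real.sqrt_mul (by norm_num : (0:ℝ) ≤ 4),
          show Real.sqrt 4 = 2 by rw [show (4:ℝ) = 2 ^ 2 by norm_num,
            Real.sqrt_sq (by norm_num : (0:ℝ) ≤ 2)],
          Real.sqrt_eq_rpow, Real.sqrt_eq_rpow, ← Real.rpow_mul hMpos.le]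
        norm_num
      have h4 : s * (M:ℝ) ^ ((1:ℝ)/4) = 2 * (M:ℝ) ^ ((3:ℝ)/4) := by
        rw [hs, Real.sqrt_eq_rpow, mul_assoc, ← Real.rpow_add hMpos]
        norm_num
      calc (1 / 2) * (X:ℝ) * Real.sqrt (4 * M - (X:ℝ) ^ 2)
          ≤ (1 / 2) * s * (2 * (M:ℝ) ^ ((1:ℝ)/4)) := by
            apply mul_le_mul (by nlinarith) (h3 ▸ h2) (Real.sqrt_nonneg _) (by positivity)
        _ = s * (M:ℝ) ^ ((1:ℝ)/4) := by ring
        _ = 2 * (M:ℝ) ^ ((3:ℝ)/4) := h4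
    have hterm2 : 2 * (M:ℝ) * Real.arcsin ((X:ℝ) / s) ≤ Real.pi * M := by
      have := Real.arcsin_le_pi_div_two ((X:ℝ) / s)
      nlinarith
    rcases lt_or_eq_of_le hXle with hlt | heq
    · -- X < s : arcsin strict
      have : Real.arcsin ((X:ℝ) / s) < π / 2 :=
        Real.arcsin_lt_pi_div_two.2 ((div_lt_one hspos).2 hlt)
      have h2 : 2 * (M:ℝ) * Real.arcsin ((X:ℝ) / s) < Real.pi * M := by nlinarith
      linarith
    · -- X = s : sqrt term vanishes
      have hz : 4 * (M:ℝ) - (X:ℝ) ^ 2 = 0 := by nlinarith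
      rw [hz, Real.sqrt_zero]
      have hMpow : (0:ℝ) < (M:ℝ) ^ ((3:ℝ)/4) := Real.rpow_pos_of_pos hMpos _
      nlinarith
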